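/- Let S ⊆ ℝᵈ be the linear span of vectors u₀⁽¹⁾,…,u₀⁽ᴶ⁾. Suppose u: [0,T] → (ℝᵈ)ᴶ is differentiable (pathwise, for a fixed realization) and each particle satisfies duₜ⁽ʲ⁾/dt = (1/J)∑ₖ αⱼₖ(t)(uₜ⁽ᵏ⁾ - ūₜ) for scalar coefficients αⱼₖ(t) continuous in t, with uₜ⁽ʲ⁾|_{t=0} = u₀⁽ʲ⁾. Then uₜ⁽ʲ⁾ ∈ S for all t ∈ [0,T] and all j. -/

import Mathlib

open Set Finset


/-- Subspace property of (the drift part of) ensemble Kalman inversion: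
if each particle satisfies `duₜ⁽ʲ⁾/dt = (1/J) ∑ₖ αⱼₖ(t)(uₜ⁽ᵏ⁾ - ūₜ)` on `[0,T]` with
continuous scalar coefficients and initial values `u₀⁽ʲ⁾`, then every particle stays
in the linear span `S` of the initial ensemble. -/
theorem eki_subspace_property
    {d J : ℕ} (hJ : 0 < J) (T : ℝ) (hT : 0 ≤ T)
    (u₀ : Fin J → (Fin d → ℝ))
    (S : Submodule ℝ (Fin d → ℝ)) (hS : S = Submodule.span ℝ (Set.range u₀))
    (u : ℝ → Fin J → (Fin d → ℝ))
    (α : Fin J → Fin J → ℝ → ℝ) (hα : ∀ j k, Continuous (α j k))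
    (hderiv : ∀ (j : Fin J), ∀ t ∈ Set.Icc (0 : ℝ) T,
      HasDerivAt (fun s => u s j)
        ((J : ℝ)⁻¹ • ∑ k, α j k t • (u t k - (J : ℝ)⁻¹ • ∑ i, u t i)) t)
    (hinit : ∀ j, u 0 j = u₀ j) :
    ∀ t ∈ Set.Icc (0 : ℝ) T, ∀ j, u t j ∈ S := by
  subst hS
  set S := Submodule.span ℝ (Set.range u₀) with hS
  -- quotient space and linear map with kernel S
  set n := Module.finrank ℝ ((Fin d → ℝ) ⧸ S) with hn
  let b : Module.Basis (Fin n) ℝ ((Fin d → ℝ) ⧸ S) := Module.finBasis ℝ _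
  let φ : (Fin d → ℝ) →ₗ[ℝ] (Fin n → ℝ) := b.equivFun.toLinearMap ∘ₗ S.mkQ
  have hφmem : ∀ x, φ x = 0 → x ∈ S := by
    intro x hx
    have h2 : b.equivFun (S.mkQ x) = 0 := hx
    have h3 : S.mkQ x = 0 := b.equivFun.map_eq_zero_iff.1 h2
    rw [Submodule.mkQ_apply, Submodule.Quotient.mk_eq_zero] at h3
    exact h3
  have hφS : ∀ x ∈ S, φ x = 0 := by
    intro x hx
    simp [φ, Submodule.mkQ_apply, (Submodule.Quotient.mk_eq_zero S).2 hx]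
  let φc : (Fin d → ℝ) →L[ℝ] (Fin n → ℝ) := LinearMap.toContinuousLinearMap φ
  let L : (Fin J → Fin d → ℝ) →L[ℝ] (Fin J → Fin n → ℝ) :=
    ContinuousLinearMap.pi fun j => φc.comp (ContinuousLinearMap.proj j)
  set g : ℝ → Fin J → Fin n → ℝ := fun t => L (u t) with hg
  -- derivative of g
  have hgd : ∀ t ∈ Set.Icc (0 : ℝ) T,
      HasDerivAt g
        (fun j => (J : ℝ)⁻¹ • ∑ k, α j k t • (g t k - (J : ℝ)⁻¹ • ∑ i, g t i)) t := by
    intro t ht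
    have hu : HasDerivAt u
        (fun j => (J : ℝ)⁻¹ • ∑ k, α j k t • (u t k - (J : ℝ)⁻¹ • ∑ i, u t i)) t :=
      hasDerivAt_pi.2 fun j => hderiv j t ht
    have := L.hasFDerivAt.comp_hasDerivAt t hu
    refine HasDerivAt.congr_deriv this (Eq.symm ?_)
    funext j
    simp only [L, ContinuousLinearMap.pi_apply, ContinuousLinearMap.comp_apply,
      ContinuousLinearMap.proj_apply]
    show (J : ℝ)⁻¹ • ∑ k, α j k t • (φc (u t k) - (J : ℝ)⁻¹ • ∑ i, φc (u t i)) = _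
    rw [map_smul, map_sum]
    congr 1
    refine Finset.sum_congr rfl fun k _ => ?_
    rw [map_smul, map_sub, map_smul, map_sum]
  -- uniform bound on α
  obtain ⟨t₀, ht₀, hmax⟩ := (isCompact_Icc (a := (0:ℝ)) (b := T)).exists_isMaxOn
    (nonempty_Icc.2 hT)
    (Continuous.continuousOn
      (continuous_finset_sum _ fun j _ => continuous_finset_sum _ fun k _ => (hα j k).abs))
  set A : ℝ := ∑ j : Fin J, ∑ k : Fin J, |α j k t₀| with hA
  have hA0 : 0 ≤ A := Finset.sum_nonneg fun j _ => Finset.sum_nonneg fun k _ => abs_nonneg _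
  have hαA : ∀ j k, ∀ t ∈ Set.Icc (0 : ℝ) T, |α j k t| ≤ A := by
    intro j k t ht
    refine le_trans ?_ (hmax ht)
    calc |α j k t| ≤ ∑ k' : Fin J, |α j k' t| :=
          Finset.single_le_sum (f := fun k' => |α j k' t|)
            (fun k' _ => abs_nonneg _) (Finset.mem_univ k)
      _ ≤ ∑ j' : Fin J, ∑ k' : Fin J, |α j' k' t| :=
          Finset.single_le_sum (f := fun j' => ∑ k' : Fin J, |α j' k' t|)
            (fun j' _ => Finset.sum_nonneg fun k' _ => abs_nonneg _) (Finset.mem_univ j)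
  -- Gronwall
  have key : ∀ t ∈ Set.Icc (0 : ℝ) T, ‖g t‖ ≤ gronwallBound 0 (2 * A) 0 (t - 0) := by
    apply norm_le_gronwallBound_of_norm_deriv_right_le
    · intro t ht
      exact (hgd t ht).continuousAt.continuousWithinAt
    · intro t ht
      exact ((hgd t (Set.mem_Icc_of_Ico ht)).hasDerivWithinAt)
    · have : g 0 = 0 := by
        funext j
        show φc (u 0 j) = 0
        rw [hinit]
        exact hφS _ (Submodule.subset_span ⟨j, rfl⟩)
      simp [this]
    · intro t ht
      have ht' : t ∈ Set.Icc (0:ℝ) T := Set.mem_Icc_of_Ico ht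
      rw [add_zero]
      refine (pi_norm_le_iff_of_nonneg (by positivity)).2 fun j => ?_
      have hmean : ‖(J : ℝ)⁻¹ • ∑ i, g t i‖ ≤ ‖g t‖ := by
        rw [norm_smul]
        calc ‖(J : ℝ)⁻¹‖ * ‖∑ i, g t i‖ ≤ (J : ℝ)⁻¹ * ∑ i : Fin J, ‖g t i‖ := by
              rw [Real.norm_eq_abs, abs_of_nonneg (by positivity)]
              exact mul_le_mul_of_nonneg_left (norm_sum_le _ _) (by positivity)
          _ ≤ (J : ℝ)⁻¹ * ∑ i : Fin J, ‖g t‖ := by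
              refine mul_le_mul_of_nonneg_left (Finset.sum_le_sum fun i _ => ?_) (by positivity)
              exact norm_le_pi_norm (g t) i
          _ = ‖g t‖ := by
              rw [Finset.sum_const, Finset.card_univ, Fintype.card_fin, nsmul_eq_mul]
              field_simp
      calc ‖(J : ℝ)⁻¹ • ∑ k, α j k t • (g t k - (J : ℝ)⁻¹ • ∑ i, g t i)‖
          ≤ (J : ℝ)⁻¹ * ∑ k : Fin J, |α j k t| * ‖g t k - (J : ℝ)⁻¹ • ∑ i, g t i‖ := by
            rw [norm_smul, Real.norm_eq_abs, abs_of_nonneg (by positivity)]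
            refine mul_le_mul_of_nonneg_left ?_ (by positivity)
            refine (norm_sum_le _ _).trans (le_of_eq (Finset.sum_congr rfl fun k _ => ?_))
            rw [norm_smul, Real.norm_eq_abs]
        _ ≤ (J : ℝ)⁻¹ * ∑ k : Fin J, A * (2 * ‖g t‖) := by
            refine mul_le_mul_of_nonneg_left (Finset.sum_le_sum fun k _ => ?_) (by positivity)
            refine mul_le_mul (hαA j k t ht') ?_ (norm_nonneg _) hA0
            calc ‖g t k - (J : ℝ)⁻¹ • ∑ i, g t i‖ ≤ ‖g t k‖ + ‖(J : ℝ)⁻¹ • ∑ i, g t i‖ :=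
                  norm_sub_le _ _
              _ ≤ ‖g t‖ + ‖g t‖ := add_le_add (norm_le_pi_norm (g t) k) hmean
              _ = 2 * ‖g t‖ := by ring
        _ = 2 * A * ‖g t‖ := by
            rw [Finset.sum_const, Finset.card_univ, Fintype.card_fin, nsmul_eq_mul]
            field_simp
  intro t ht j
  have hgt : g t = 0 := by
    have := key t ht
    rw [gronwallBound_ε0_δ0] at this
    exact norm_le_zero_iff.1 this
  have : φ (u t j) = 0 := congrFun hgt j
  exact hφmem _ this
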